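/- Suppose {v_j}_{j=1}^k is a unit-norm tight frame in ℝ^n. If ε ≤ 1/√n, then for every family {δ_j}_{j=1}^k with ‖δ_j‖ < ε for all j, the family {v_j + δ_j}_{j=1}^k is a frame in ℝ^n. -/

import Mathlib

open scoped RealInnerProductSpace

lemma sq_frame_bounds_aux (a b t nu nd s : ℝ) (hb : 0 ≤ b) (hba : b ≤ a)
    (ht : 0 ≤ t) (hnd : 0 ≤ nd) (hs : 0 ≤ s) (hnu : nu = a * t) (hndle : nd ≤ b * t)
    (h1 : s ≤ nu + nd) (h2 : nu - nd ≤ s) :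
    (a - b) ^ 2 * t ^ 2 ≤ s ^ 2 ∧ s ^ 2 ≤ (a + b) ^ 2 * t ^ 2 := by
  have hlow : (a - b) * t ≤ s := by nlinarith
  have hhigh : s ≤ (a + b) * t := by nlinarith
  have hlow0 : 0 ≤ (a - b) * t := mul_nonneg (by linarith) ht
  constructor
  · nlinarith
  · nlinarith

theorem unit_tight_frame_stability {n k : ℕ} (v : Fin k → EuclideanSpace ℝ (Fin n))
    (hunit : ∀ j, ‖v j‖ = 1) (A : ℝ) (hA : 0 < A)
    (htight : ∀ x : EuclideanSpace ℝ (Fin n), ∑ j, ⟪x, v j⟫ ^ 2 = A * ‖x‖ ^ 2)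
    (ε : ℝ) (hε : ε ≤ 1 / Real.sqrt n)
    (δ : Fin k → EuclideanSpace ℝ (Fin n)) (hδ : ∀ j, ‖δ j‖ < ε) :
    ∃ A' B' : ℝ, 0 < A' ∧ A' ≤ B' ∧
      ∀ x : EuclideanSpace ℝ (Fin n),
        A' * ‖x‖ ^ 2 ≤ ∑ j, ⟪x, v j + δ j⟫ ^ 2 ∧
        ∑ j, ⟪x, v j + δ j⟫ ^ 2 ≤ B' * ‖x‖ ^ 2 := by
  rcases Nat.eq_zero_or_pos n with hn | hn
  · subst hn
    refine ⟨1, 1, one_pos, le_refl _, fun x => ?_⟩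
    have hx : x = 0 := Subsingleton.elim x 0
    subst hx
    simp
  -- n > 0
  have hnormsq : ∀ (m : ℕ) (w : EuclideanSpace ℝ (Fin m)), ‖w‖ ^ 2 = ∑ i, (w i) ^ 2 := by
    intro m w
    rw [PiLp.norm_sq_eq_of_L2]
    simp [Real.norm_eq_abs, sq_abs]
  have hkey : ∀ i : Fin n, ∑ j, (v j i) ^ 2 = A := by
    intro i
    have h := htight (EuclideanSpace.single i (1 : ℝ))
    simpa [EuclideanSpace.inner_single_left, EuclideanSpace.norm_single] using h
  have hAn : A * n = k := by
    have h1 : ∑ i : Fin n, ∑ j, (v j i) ^ 2 = A * n := by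
      simp [hkey, Finset.sum_const, mul_comm]
    have h2 : ∑ i : Fin n, ∑ j, (v j i) ^ 2 = k := by
      rw [Finset.sum_comm]
      have hv : ∀ j, ∑ i, (v j i) ^ 2 = 1 := by
        intro j
        rw [← hnormsq n (v j), hunit j, one_pow]
      simp [hv]
    linarith
  have hnpos : (0 : ℝ) < n := by exact_mod_cast hn
  have hkR : (0 : ℝ) < k := by rw [← hAn]; positivity
  have hk : 0 < k := by exact_mod_cast hkR
  haveI : Nonempty (Fin k) := Fin.pos_iff_nonempty.mp hk
  set c := Finset.univ.sup' Finset.univ_nonempty (fun j => ‖δ j‖) with hc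
  have hc_le : ∀ j, ‖δ j‖ ≤ c := by
    intro j
    rw [hc]
    exact Finset.le_sup' (fun j => ‖δ j‖) (Finset.mem_univ j)
  obtain ⟨j₀, -, hj₀⟩ := Finset.exists_mem_eq_sup' Finset.univ_nonempty (fun j => ‖δ j‖)
  have hc_lt : c < ε := by rw [hc, hj₀]; exact hδ j₀
  have hc0 : 0 ≤ c := le_trans (norm_nonneg _) (hc_le j₀)
  have hsn : (0 : ℝ) < Real.sqrt n := Real.sqrt_pos.mpr hnpos
  have hsk : (0 : ℝ) < Real.sqrt k := Real.sqrt_pos.mpr hkR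
  have hsA : (0 : ℝ) < Real.sqrt A := Real.sqrt_pos.mpr hA
  have hsqrt_rel : Real.sqrt A * Real.sqrt n = Real.sqrt k := by
    rw [← Real.sqrt_mul hA.le, hAn]
  have hcn : c < 1 / Real.sqrt n := lt_of_lt_of_le hc_lt hε
  have hlt : Real.sqrt k * c < Real.sqrt A := by
    have h1 : Real.sqrt k * c < Real.sqrt k * (1 / Real.sqrt n) :=
      mul_lt_mul_of_pos_left hcn hsk
    have h2 : Real.sqrt k * (1 / Real.sqrt n) = Real.sqrt A := by
      rw [← hsqrt_rel]; field_simp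
    linarith
  have hkc0 : 0 ≤ Real.sqrt k * c := by positivity
  refine ⟨(Real.sqrt A - Real.sqrt k * c) ^ 2, (Real.sqrt A + Real.sqrt k * c) ^ 2,
    pow_pos (by linarith) 2, by nlinarith, fun x => ?_⟩
  set u : EuclideanSpace ℝ (Fin k) := WithLp.toLp 2 (fun j => ⟪x, v j⟫) with hu
  set d : EuclideanSpace ℝ (Fin k) := WithLp.toLp 2 (fun j => ⟪x, δ j⟫) with hd
  have hS : ∑ j, ⟪x, v j + δ j⟫ ^ 2 = ‖u + d‖ ^ 2 := by
    rw [hnormsq k (u + d)]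
    refine Finset.sum_congr rfl fun j _ => ?_
    have : (u + d) j = ⟪x, v j⟫ + ⟪x, δ j⟫ := rfl
    rw [this, inner_add_right]
  have hun : ‖u‖ = Real.sqrt A * ‖x‖ := by
    have h1 : ‖u‖ ^ 2 = A * ‖x‖ ^ 2 := by
      rw [hnormsq k u, ← htight x]
    have h2 : ‖u‖ = Real.sqrt (A * ‖x‖ ^ 2) := by
      rw [← h1, Real.sqrt_sq (norm_nonneg u)]
    rw [h2, Real.sqrt_mul hA.le, Real.sqrt_sq (norm_nonneg x)]
  have hdn : ‖d‖ ≤ Real.sqrt k * c * ‖x‖ := by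
    have h1 : ‖d‖ ^ 2 ≤ (Real.sqrt k * c * ‖x‖) ^ 2 := by
      rw [hnormsq k d]
      have hb : ∀ j : Fin k, (d j) ^ 2 ≤ (c * ‖x‖) ^ 2 := by
        intro j
        have h3 : |⟪x, δ j⟫| ≤ ‖x‖ * ‖δ j‖ := abs_real_inner_le_norm x (δ j)
        have h4 : ‖x‖ * ‖δ j‖ ≤ c * ‖x‖ := by
          rw [mul_comm]
          exact mul_le_mul_of_nonneg_right (hc_le j) (norm_nonneg x)
        nlinarith [abs_nonneg ⟪x, δ j⟫, sq_abs ⟪x, δ j⟫]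
      calc ∑ j, (d j) ^ 2 ≤ ∑ _j : Fin k, (c * ‖x‖) ^ 2 :=
            Finset.sum_le_sum fun j _ => hb j
        _ = k * (c * ‖x‖) ^ 2 := by simp [Finset.sum_const, nsmul_eq_mul]
        _ = (Real.sqrt k * c * ‖x‖) ^ 2 := by
            conv_lhs => rw [← Real.sq_sqrt hkR.le]
            ring
    have h2 := Real.sqrt_le_sqrt h1
    rwa [Real.sqrt_sq (norm_nonneg d),
      Real.sqrt_sq (mul_nonneg hkc0 (norm_nonneg x))] at h2
  have htri1 : ‖u + d‖ ≤ ‖u‖ + ‖d‖ := norm_add_le u d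
  have htri2 : ‖u‖ - ‖d‖ ≤ ‖u + d‖ := by
    have h := norm_sub_le (u + d) d
    rw [add_sub_cancel_right] at h
    linarith
  rw [hS]
  exact sq_frame_bounds_aux (Real.sqrt A) (Real.sqrt k * c) ‖x‖ ‖u‖ ‖d‖ ‖u + d‖
    hkc0 hlt.le (norm_nonneg x) (norm_nonneg d) (norm_nonneg _) hun hdn htri1 htri2
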